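/- Let C ⊆ ℝⁿ and let I ⊆ {1,…,n} be nonempty with π(C) unbounded, and let D be a nonempty compact subset of the Clarke tangent cone T_C(∞_I). Then for every ε > 0 there exist constants R > 0 and λ > 0 such that for every v in the convex hull of D, every x ∈ C with ‖π(x)‖ > R, and every t ∈ [0, λ], the set C ∩ (x + t·B_ε(v)) is nonempty, where B_ε(v) is the closed ball of radius ε around v. -/

import Mathlib

open Filter Topology Metric Set Bornology
open scoped InnerProductSpace Pointwise

noncomputable section

/-- Euclidean `n`-space. -/
abbrev En (n : ℕ) : Type := EuclideanSpace ℝ (Fin n)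

/-- The Clarke tangent cone at infinity of `C ⊆ E`, where "going to infinity" is
measured by `‖p x‖ → ∞` for a projection map `p`:  `v` belongs to the cone iff for all
sequences `x k ∈ C` with `‖p (x k)‖ → ∞` and all positive sequences `t k → 0` there is a
sequence `w k → v` with `x k + t k • w k ∈ C` for all `k`. -/
def tangentConeAtInfty {E F : Type*} [NormedAddCommGroup E] [NormedSpace ℝ E] [Norm F]
    (p : E → F) (C : Set E) : Set E :=
  {v | ∀ (x : ℕ → E) (t : ℕ → ℝ), (∀ k, x k ∈ C) →
      Tendsto (fun k => ‖p (x k)‖) atTop atTop →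
      (∀ k, 0 < t k) → Tendsto t atTop (𝓝 0) →
      ∃ w : ℕ → E, Tendsto w atTop (𝓝 v) ∧ ∀ k, x k + t k • w k ∈ C}

/-- Projection of `ℝⁿ` onto the coordinates indexed by `I`. -/
def proj {n : ℕ} (I : Finset (Fin n)) (x : En n) : EuclideanSpace ℝ ↥I := WithLp.toLp 2 (fun i => x i)

lemma norm_proj_le {n : ℕ} (I : Finset (Fin n)) (x : En n) : ‖proj I x‖ ≤ ‖x‖ := by
  rw [EuclideanSpace.norm_eq, EuclideanSpace.norm_eq]
  apply Real.sqrt_le_sqrt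
  rw [show (∑ i : ↥I, ‖proj I x i‖ ^ 2) = ∑ i ∈ I, ‖x i‖ ^ 2 from
    Finset.sum_coe_sort I (fun i => ‖x i‖ ^ 2)]
  exact Finset.sum_le_sum_of_subset_of_nonneg (Finset.subset_univ I)
    (fun i _ _ => by positivity)

lemma proj_lower {n : ℕ} (I : Finset (Fin n)) (x u : En n) {s : ℝ} (hs : 0 ≤ s) :
    ‖proj I x‖ - s * ‖u‖ ≤ ‖proj I (x + s • u)‖ := by
  have h1 : proj I (x + s • u) = proj I x + s • proj I u := rfl
  have h2 : ‖proj I x‖ ≤ ‖proj I x + s • proj I u‖ + ‖s • proj I u‖ := by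
    have := norm_add_le (proj I x + s • proj I u) (-(s • proj I u))
    simpa using this
  have h3 : ‖s • proj I u‖ ≤ s * ‖u‖ := by
    rw [norm_smul, Real.norm_of_nonneg hs]
    exact mul_le_mul_of_nonneg_left (norm_proj_le I u) hs
  rw [h1]; linarith

/-- Uniform single-direction tangency over the compact set `D`. -/
lemma keyA {n : ℕ} (C : Set (En n)) (I : Finset (Fin n)) (D : Set (En n))
    (hDcpt : IsCompact D) (hDsub : D ⊆ tangentConeAtInfty (proj I) C)
    {ε : ℝ} (hε : 0 < ε) :
    ∃ R : ℝ, 0 < R ∧ ∃ lam : ℝ, 0 < lam ∧ ∀ d ∈ D, ∀ x ∈ C, R < ‖proj I x‖ →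
      ∀ t : ℝ, 0 ≤ t → t ≤ lam → ∃ u : En n, ‖u - d‖ ≤ ε ∧ x + t • u ∈ C := by
  by_contra hcon
  push_neg at hcon
  have key : ∀ k : ℕ, ∃ d ∈ D, ∃ x ∈ C, ((k : ℝ) + 1) < ‖proj I x‖ ∧
      ∃ t : ℝ, 0 ≤ t ∧ t ≤ 1 / ((k : ℝ) + 1) ∧
        ∀ u : En n, ‖u - d‖ ≤ ε → x + t • u ∉ C := by
    intro k
    obtain ⟨d, hd, x, hx, hRx, t, ht0, htl, hbad⟩ :=
      hcon ((k : ℝ) + 1) (by positivity) (1 / ((k : ℝ) + 1)) (by positivity)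
    exact ⟨d, hd, x, hx, hRx, t, ht0, htl, fun u hu hC => hbad u hu hC⟩
  choose d hdD x hxC hRx t ht0 htl hbad using key
  -- t k must be positive: otherwise take u = d k (x + 0 • u = x ∈ C)
  have htpos : ∀ k, 0 < t k := by
    intro k
    rcases (ht0 k).lt_or_eq with h | h
    · exact h
    · exfalso
      exact hbad k (d k) (by simp [hε.le]) (by rw [← h, zero_smul, add_zero]; exact hxC k)
  obtain ⟨d0, hd0D, φ, hφmono, hφlim⟩ := hDcpt.tendsto_subseq hdD
  obtain ⟨w, hwlim, hwC⟩ := hDsub hd0D (fun k => x (φ k)) (fun k => t (φ k))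
    (fun k => hxC (φ k))
    (by
      apply tendsto_atTop_mono (fun k => ?_) tendsto_natCast_atTop_atTop
      have h1 : (k : ℝ) ≤ (φ k : ℝ) := by exact_mod_cast hφmono.le_apply
      have := hRx (φ k)
      linarith)
    (fun k => htpos (φ k))
    (by
      apply squeeze_zero (fun k => (htpos (φ k)).le) (fun k => ?_)
        tendsto_one_div_add_atTop_nhds_zero_nat
      calc t (φ k) ≤ 1 / ((φ k : ℝ) + 1) := htl (φ k)
        _ ≤ 1 / ((k : ℝ) + 1) := by
            apply one_div_le_one_div_of_le (by positivity)
            have : (k : ℝ) ≤ (φ k : ℝ) := by exact_mod_cast hφmono.le_apply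
            linarith)
  have hdiff : Tendsto (fun k => ‖w k - d (φ k)‖) atTop (𝓝 0) := by
    have : Tendsto (fun k => w k - d (φ k)) atTop (𝓝 (d0 - d0)) := hwlim.sub hφlim
    rw [sub_self] at this
    simpa using this.norm
  have hev : ∀ᶠ k in atTop, ‖w k - d (φ k)‖ < ε := hdiff.eventually (gt_mem_nhds hε)
  obtain ⟨k, hk⟩ := hev.exists
  exact hbad (φ k) (w k) hk.le (hwC k)

/-- Inductive step over convex combinations. -/
lemma keyB {n : ℕ} (C : Set (En n)) (I : Finset (Fin n)) (D : Set (En n))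
    {ε M R1 lam : ℝ} (hε : 0 < ε) (hM : 0 ≤ M) (hMD : ∀ d ∈ D, ‖d‖ ≤ M)
    (hA : ∀ d ∈ D, ∀ x ∈ C, R1 < ‖proj I x‖ →
      ∀ t : ℝ, 0 ≤ t → t ≤ lam → ∃ u : En n, ‖u - d‖ ≤ ε ∧ x + t • u ∈ C)
    {ι : Type} (s : Finset ι) :
    ∀ (w : ι → ℝ) (z : ι → En n), (∀ i ∈ s, 0 ≤ w i) → (∑ i ∈ s, w i) ≤ 1 →
      (∀ i ∈ s, z i ∈ D) → ∀ x ∈ C, ∀ τ : ℝ, 0 < τ → τ ≤ lam →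
      R1 + τ * (M + ε) * (∑ i ∈ s, w i) < ‖proj I x‖ →
      ∃ u : En n, ‖u - ∑ i ∈ s, w i • z i‖ ≤ ε * ∑ i ∈ s, w i ∧
        ‖u‖ ≤ (M + ε) * ∑ i ∈ s, w i ∧ x + τ • u ∈ C := by
  induction s using Finset.cons_induction with
  | empty =>
    intro w z _ _ _ x hx τ _ _ _
    refine ⟨0, by simp, by simp, by simpa using hx⟩
  | cons a s ha IH =>
    intro w z hw0 hwsum hz x hx τ hτ0 hτlam hRx
    have hsum_cons : ∑ i ∈ Finset.cons a s ha, w i = w a + ∑ i ∈ s, w i :=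
      Finset.sum_cons ha
    have hwa0 : 0 ≤ w a := hw0 a (Finset.mem_cons_self a s)
    have hws0 : 0 ≤ ∑ i ∈ s, w i :=
      Finset.sum_nonneg (fun i hi => hw0 i (Finset.mem_cons_of_mem hi))
    have hwa1 : w a ≤ 1 := by rw [hsum_cons] at hwsum; linarith
    have hMε : 0 < M + ε := by linarith
    rw [hsum_cons] at hRx
    -- first step along z a
    obtain ⟨ua, hua, huaC⟩ := hA (z a) (hz a (Finset.mem_cons_self a s)) x hx
      (by nlinarith [mul_nonneg (mul_nonneg hτ0.le hMε.le) (add_nonneg hwa0 hws0)]) (τ * w a) (by positivity)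
      (by nlinarith)
    have hza : ‖z a‖ ≤ M := hMD (z a) (hz a (Finset.mem_cons_self a s))
    have huanorm : ‖ua‖ ≤ M + ε := by
      have := norm_sub_norm_le ua (z a)
      linarith
    set x' := x + (τ * w a) • ua with hx'
    have hpx' : R1 + τ * (M + ε) * (∑ i ∈ s, w i) < ‖proj I x'‖ := by
      have hlow := proj_lower I x ua (s := τ * w a) (by positivity)
      have h1 : τ * w a * ‖ua‖ ≤ τ * w a * (M + ε) :=
        mul_le_mul_of_nonneg_left huanorm (by positivity)
      nlinarith
    obtain ⟨u', hu'close, hu'norm, hu'C⟩ := IH w z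
      (fun i hi => hw0 i (Finset.mem_cons_of_mem hi))
      (by rw [hsum_cons] at hwsum; linarith)
      (fun i hi => hz i (Finset.mem_cons_of_mem hi)) x' huaC τ hτ0 hτlam hpx'
    refine ⟨w a • ua + u', ?_, ?_, ?_⟩
    · rw [Finset.sum_cons, hsum_cons]
      have key : w a • ua + u' - (w a • z a + ∑ i ∈ s, w i • z i)
          = w a • (ua - z a) + (u' - ∑ i ∈ s, w i • z i) := by
        rw [smul_sub]; abel
      rw [key]
      calc ‖w a • (ua - z a) + (u' - ∑ i ∈ s, w i • z i)‖
          ≤ ‖w a • (ua - z a)‖ + ‖u' - ∑ i ∈ s, w i • z i‖ := norm_add_le _ _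
        _ ≤ w a * ε + ε * ∑ i ∈ s, w i := by
            rw [norm_smul, Real.norm_of_nonneg hwa0]
            exact add_le_add (mul_le_mul_of_nonneg_left hua hwa0) hu'close
        _ = ε * (w a + ∑ i ∈ s, w i) := by ring
    · rw [hsum_cons]
      calc ‖w a • ua + u'‖ ≤ ‖w a • ua‖ + ‖u'‖ := norm_add_le _ _
        _ ≤ w a * (M + ε) + (M + ε) * ∑ i ∈ s, w i := by
            rw [norm_smul, Real.norm_of_nonneg hwa0]
            exact add_le_add (mul_le_mul_of_nonneg_left huanorm hwa0) hu'norm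
        _ = (M + ε) * (w a + ∑ i ∈ s, w i) := by ring
    · have : x + τ • (w a • ua + u') = x' + τ • u' := by
        rw [hx', smul_add, smul_smul]; abel
      rw [this]; exact hu'C

theorem stmt0 (n : ℕ) (C : Set (En n)) (I : Finset (Fin n)) (hI : I.Nonempty)
    (hunb : ¬ IsBounded (proj I '' C))
    (D : Set (En n)) (hDne : D.Nonempty) (hDcpt : IsCompact D)
    (hDsub : D ⊆ tangentConeAtInfty (proj I) C) :
    ∀ ε : ℝ, 0 < ε → ∃ R : ℝ, 0 < R ∧ ∃ lam : ℝ, 0 < lam ∧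
      ∀ v ∈ convexHull ℝ D, ∀ x ∈ C, R < ‖proj I x‖ → ∀ t ∈ Icc (0:ℝ) lam,
        (C ∩ (fun u => x + t • u) '' closedBall v ε).Nonempty := by
  intro ε hε
  obtain ⟨R1, hR1, lam, hlam, hA⟩ := keyA C I D hDcpt hDsub hε
  obtain ⟨M0, hM0⟩ := hDcpt.isBounded.exists_norm_le
  set M := max M0 0 with hMdef
  have hM : 0 ≤ M := le_max_right _ _
  have hMD : ∀ d ∈ D, ‖d‖ ≤ M := fun d hd => le_trans (hM0 d hd) (le_max_left _ _)
  refine ⟨R1 + lam * (M + ε), by positivity, lam, hlam, ?_⟩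
  intro v hv x hx hRx t ⟨ht0, htlam⟩
  rcases ht0.lt_or_eq with htpos | hteq
  · -- t > 0
    rw [convexHull_eq] at hv
    obtain ⟨ι, s, w, z, hw0, hw1, hz, hcm⟩ := hv
    have hvsum : v = ∑ i ∈ s, w i • z i := by
      rw [← hcm, Finset.centerMass_eq_of_sum_1 s z hw1]
    obtain ⟨u, huclose, _, huC⟩ := keyB C I D hε hM hMD hA s w z hw0 hw1.le hz x hx
      t htpos htlam
      (by
        rw [hw1, mul_one]
        have : t * (M + ε) ≤ lam * (M + ε) :=
          mul_le_mul_of_nonneg_right htlam (by positivity)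
        linarith)
    refine ⟨x + t • u, huC, u, ?_, rfl⟩
    rw [mem_closedBall, dist_eq_norm, hvsum]
    rw [hw1, mul_one] at huclose
    exact huclose
  · -- t = 0
    refine ⟨x, hx, v, mem_closedBall_self hε.le, ?_⟩
    show x + t • v = x
    rw [← hteq, zero_smul, add_zero]
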